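/- Let G be a finite group, p a prime, H a subgroup of G, and N a normal subgroup of G. If H is a strong p-CAP-subgroup of G, then HN/N is a strong p-CAP-subgroup of G/N. -/

import Mathlib

/-- `U/V` is a chief factor of `G`: both normal in `G`, `V < U`, and no normal
subgroup of `G` lies strictly between them. -/
def IsChiefFactor (G : Type*) [Group G] (V U : Subgroup G) : Prop :=
  V.Normal ∧ U.Normal ∧ V < U ∧
    ∀ W : Subgroup G, W.Normal → V < W → W < U → False

/-- `A` covers (`A ⊔ U = A ⊔ V`) or avoids (`A ⊓ U = A ⊓ V`) the factor `U/V`. -/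
def CoversOrAvoids {G : Type*} [Group G] (A V U : Subgroup G) : Prop :=
  A ⊔ U = A ⊔ V ∨ A ⊓ U = A ⊓ V

/-- `A` is a `p`-CAP-subgroup of `G`: it covers or avoids every chief factor of `G`
whose order (`V.relindex U = |U/V|`) is divisible by `p`. -/
def IsPCAPSubgroup {G : Type*} [Group G] (p : ℕ) (A : Subgroup G) : Prop :=
  ∀ V U : Subgroup G, IsChiefFactor G V U → p ∣ V.relIndex U → CoversOrAvoids A V U

/-- `A` is a strong `p`-CAP-subgroup of `G`: `A` is a `p`-CAP-subgroup of every
subgroup of `G` containing `A`. -/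
def IsStrongPCAPSubgroup {G : Type*} [Group G] (p : ℕ) (A : Subgroup G) : Prop :=
  ∀ K : Subgroup G, A ≤ K → IsPCAPSubgroup p (A.subgroupOf K)

/-- `A` is a CAP-subgroup of `G`: it covers or avoids every chief factor of `G`. -/
def IsCAPSubgroup {G : Type*} [Group G] (A : Subgroup G) : Prop :=
  ∀ V U : Subgroup G, IsChiefFactor G V U → CoversOrAvoids A V U

section Aux

variable {Γ Γ' : Type*} [Group Γ] [Group Γ']

lemma map_inf_comap (φ : Γ →* Γ') (A : Subgroup Γ) (B : Subgroup Γ') :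
    (A ⊓ B.comap φ).map φ = A.map φ ⊓ B := by
  ext y
  constructor
  · rintro ⟨x, ⟨hxA, hxB⟩, rfl⟩
    exact ⟨⟨x, hxA, rfl⟩, hxB⟩
  · rintro ⟨⟨x, hxA, rfl⟩, hyB⟩
    exact ⟨x, ⟨hxA, hyB⟩, rfl⟩

lemma chief_comap (φ : Γ →* Γ') (hφ : Function.Surjective φ) {V' U' : Subgroup Γ'}
    (h : IsChiefFactor Γ' V' U') :
    IsChiefFactor Γ (V'.comap φ) (U'.comap φ) := by
  obtain ⟨hVn, hUn, hlt, hmax⟩ := h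
  refine ⟨hVn.comap φ, hUn.comap φ, ?_, ?_⟩
  · refine lt_of_le_of_ne (Subgroup.comap_mono hlt.le) fun hEq => ?_
    exact hlt.ne (Subgroup.comap_injective hφ hEq)
  · intro W hWn hVW hWU
    have hker : φ.ker ≤ W := le_trans (fun x hx => by
      simp only [Subgroup.mem_comap]
      exact (hx : φ x = 1) ▸ V'.one_mem) hVW.le
    refine hmax (W.map φ) (hWn.map φ hφ) ?_ ?_
    · refine lt_of_le_of_ne ?_ fun hEq => ?_
      · rw [← Subgroup.map_comap_eq_self_of_surjective hφ V']
        exact Subgroup.map_mono hVW.le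
      · have : V'.comap φ = W := by
          rw [hEq, Subgroup.comap_map_eq_self hker]
        exact hVW.ne this
    · refine lt_of_le_of_ne ?_ fun hEq => ?_
      · rw [← Subgroup.map_comap_eq_self_of_surjective hφ U']
        exact Subgroup.map_mono hWU.le
      · have : W = U'.comap φ := by
          rw [← Subgroup.comap_map_eq_self hker, hEq]
        exact hWU.ne this

lemma pcap_map (φ : Γ →* Γ') (hφ : Function.Surjective φ) {p : ℕ} {A : Subgroup Γ}
    (h : IsPCAPSubgroup p A) : IsPCAPSubgroup p (A.map φ) := by
  intro V' U' hcf hdvd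
  have hrel : (V'.comap φ).relIndex (U'.comap φ) = V'.relIndex U' := by
    rw [Subgroup.relIndex_comap, Subgroup.map_comap_eq_self_of_surjective hφ]
  rcases h (V'.comap φ) (U'.comap φ) (chief_comap φ hφ hcf) (hrel ▸ hdvd) with hc | ha
  · left
    have := congrArg (Subgroup.map φ) hc
    rwa [Subgroup.map_sup, Subgroup.map_sup,
      Subgroup.map_comap_eq_self_of_surjective hφ,
      Subgroup.map_comap_eq_self_of_surjective hφ] at this
  · right
    have := congrArg (Subgroup.map φ) ha
    rwa [map_inf_comap, map_inf_comap] at this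

end Aux

theorem stmt_3 {G : Type*} [Group G] [Finite G] (p : ℕ) (hp : p.Prime)
    (H : Subgroup G) (N : Subgroup G) [N.Normal]
    (hH : IsStrongPCAPSubgroup p H) :
    IsStrongPCAPSubgroup p (H.map (QuotientGroup.mk' N)) := by
  intro K' hK'
  set π := QuotientGroup.mk' N
  set K : Subgroup G := K'.comap π with hK
  have hHK : H ≤ K := fun h hh => hK' ⟨h, hh, rfl⟩
  -- the restriction of π to K, with codomain K'
  have hmem : ∀ x : K, π (x : G) ∈ K' := fun x => x.2
  let φ : K →* K' := (π.domRestrict K).codRestrict K' hmem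
  have hφ : Function.Surjective φ := by
    rintro ⟨y, hy⟩
    obtain ⟨g, rfl⟩ := QuotientGroup.mk'_surjective N y
    exact ⟨⟨g, hy⟩, rfl⟩
  have key : (H.subgroupOf K).map φ = (H.map π).subgroupOf K' := by
    ext x
    simp only [Subgroup.mem_map, Subgroup.mem_subgroupOf, Subgroup.mem_map]
    constructor
    · rintro ⟨k, hk, rfl⟩
      exact ⟨k, hk, rfl⟩
    · rintro ⟨h, hh, hx⟩
      have hhK : h ∈ K := by
        show π h ∈ K'
        rw [hx]
        exact x.2
      refine ⟨⟨h, hhK⟩, hh, ?_⟩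
      exact Subtype.ext hx
  rw [← key]
  exact pcap_map φ hφ (hH K hHK)
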